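/- Let X be a Banach space, L : D(L) ⊆ X → X a closed linear operator, T : [0,∞) → (X →L X) strongly continuous with ‖T(t) f‖ ≤ M ‖f‖, and f ∈ X such that for all t ≥ 0, ∫₀^t T(l) f dl ∈ D(L) and T(t) f = L(∫₀^t T(l) f dl) + f, with t ↦ L(∫₀^t T(l) f dl) continuous and bounded by 2M‖f‖. Then for every s > 0, letting q(s) = ∫₀^∞ e^{-st} T(t) f dt, we have q(s) ∈ D(L) and s·q(s) = L(q(s)) + f. -/

import Mathlib

open MeasureTheory Real Set Filter

/-- A linear operator `L` defined on a subspace `D` of `X` is closed if its graph is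
closed under limits of sequences. -/
def IsClosedOperator {X : Type*} [NormedAddCommGroup X] [NormedSpace ℝ X]
    (D : Subspace ℝ X) (L : D →ₗ[ℝ] X) : Prop :=
  ∀ (v : ℕ → D) (x y : X),
    Tendsto (fun n => (v n : X)) atTop (nhds x) →
    Tendsto (fun n => L (v n)) atTop (nhds y) →
    ∃ hx : x ∈ D, L ⟨x, hx⟩ = y

lemma submodule_integral_mem {E : Type*} [NormedAddCommGroup E] [NormedSpace ℝ E]
    [CompleteSpace E] (S : Submodule ℝ E) (hS : IsClosed (S : Set E)) {g : ℝ → E} {t : Set ℝ}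
    (ht : volume t ≠ ⊤) (hgs : ∀ᵐ x ∂(volume.restrict t), g x ∈ S)
    (hgi : IntegrableOn g t) : (∫ x in t, g x) ∈ S := by
  rcases eq_or_ne (volume t) 0 with h0 | h0
  · rw [Measure.restrict_eq_zero.mpr h0, integral_zero_measure]
    exact S.zero_mem
  · have havg : (⨍ x in t, g x) ∈ S :=
      (S.convex).set_average_mem hS h0 ht hgs hgi
    have : (∫ x in t, g x) = (volume t).toReal • (⨍ x in t, g x) := by
      rw [setAverage_eq, measureReal_def, smul_inv_smul₀]
      exact (ENNReal.toReal_pos h0 ht).ne'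
    rw [this]
    exact S.smul_mem _ havg

theorem resolvent_identity_of_integrated_cauchy_problem
    {X : Type*} [NormedAddCommGroup X] [NormedSpace ℝ X] [CompleteSpace X]
    (D : Subspace ℝ X) (L : D →ₗ[ℝ] X) (hL : IsClosedOperator D L)
    (M : ℝ) (hM : 1 ≤ M) (T : ℝ → X →L[ℝ] X)
    (hT_cont : ∀ g : X, Continuous fun t => T t g)
    (hT_bdd : ∀ t ≥ (0:ℝ), ∀ g : X, ‖T t g‖ ≤ M * ‖g‖)
    (f : X)
    (h_mem : ∀ t ≥ (0:ℝ), (∫ l in (0:ℝ)..t, T l f) ∈ D)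
    (h_cauchy : ∀ t (ht : t ≥ (0:ℝ)),
      T t f = L ⟨∫ l in (0:ℝ)..t, T l f, h_mem t ht⟩ + f)
    (h_cont : ContinuousOn
      (fun t => if ht : t ≥ (0:ℝ) then L ⟨∫ l in (0:ℝ)..t, T l f, h_mem t ht⟩ else 0)
      (Ici 0))
    (h_bdd : ∀ t (ht : t ≥ (0:ℝ)),
      ‖L ⟨∫ l in (0:ℝ)..t, T l f, h_mem t ht⟩‖ ≤ 2 * M * ‖f‖) :
    ∀ s > (0:ℝ),
      ∃ hq : (∫ t in Ioi (0:ℝ), Real.exp (-(s * t)) • T t f) ∈ D,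
        s • (∫ t in Ioi (0:ℝ), Real.exp (-(s * t)) • T t f)
          = L ⟨∫ t in Ioi (0:ℝ), Real.exp (-(s * t)) • T t f, hq⟩ + f := by
  intro s hs
  -- notation
  set I : ℝ → X := fun t => ∫ l in (0:ℝ)..t, T l f with hIdef
  set G : ℝ → X :=
    fun t => if ht : t ≥ (0:ℝ) then L ⟨∫ l in (0:ℝ)..t, T l f, h_mem t ht⟩ else 0 with hGdef
  set q : X := ∫ t in Ioi (0:ℝ), Real.exp (-(s * t)) • T t f with hqdef
  have hTf : Continuous fun t => T t f := hT_cont f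
  have hIi : ∀ a b : ℝ, IntervalIntegrable (fun l => T l f) volume a b :=
    fun a b => hTf.intervalIntegrable a b
  have hIcont : Continuous I := intervalIntegral.continuous_primitive hIi 0
  have hIderiv : ∀ t : ℝ, HasDerivAt I (T t f) t := fun t =>
    intervalIntegral.integral_hasDerivAt_right (hIi 0 t)
      (hTf.stronglyMeasurableAtFilter _ _) hTf.continuousAt
  have hInorm : ∀ t : ℝ, 0 ≤ t → ‖I t‖ ≤ M * ‖f‖ * t := by
    intro t ht
    have := intervalIntegral.norm_integral_le_of_norm_le_const
      (C := M * ‖f‖) (f := fun l => T l f) (a := 0) (b := t) ?_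
    · simpa [abs_of_nonneg ht] using this
    · intro x hx
      rw [uIoc_of_le ht] at hx
      exact hT_bdd x (le_of_lt hx.1) f
  have hexp_cont : Continuous fun t : ℝ => Real.exp (-(s * t)) := by continuity
  have hG : ∀ t (ht : (0:ℝ) ≤ t), G t = L ⟨I t, h_mem t ht⟩ := fun t ht => dif_pos ht
  have hGT : ∀ t, (0:ℝ) ≤ t → G t = T t f - f := by
    intro t ht
    rw [hG t ht]
    have := h_cauchy t ht
    rw [this]; abel
  -- the graph of L
  set Γ : Submodule ℝ (X × X) := LinearMap.range ((D.subtype).prod L) with hΓdef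
  have hΓmem : ∀ (x : X) (hx : x ∈ D), ((x, L ⟨x, hx⟩) : X × X) ∈ Γ := fun x hx => ⟨⟨x, hx⟩, rfl⟩
  have hΓclosed : IsClosed (Γ : Set (X × X)) := by
    apply IsSeqClosed.isClosed
    intro p a hp hpa
    choose d hd using hp
    have hd1 : ∀ n, ((d n : X)) = (p n).1 := fun n => congrArg Prod.fst (hd n)
    have hd2 : ∀ n, L (d n) = (p n).2 := fun n => congrArg Prod.snd (hd n)
    have h1 : Tendsto (fun n => ((d n : X))) atTop (nhds a.1) := by
      simp only [hd1]
      exact (continuousAt_fst.tendsto.comp hpa)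
    have h2 : Tendsto (fun n => L (d n)) atTop (nhds a.2) := by
      simp only [hd2]
      exact (continuousAt_snd.tendsto.comp hpa)
    obtain ⟨hx, hxy⟩ := hL d a.1 a.2 h1 h2
    exact ⟨⟨a.1, hx⟩, Prod.ext rfl hxy⟩
  -- integrability of the Laplace integrand
  have hqi : IntegrableOn (fun t => Real.exp (-(s * t)) • T t f) (Ioi (0:ℝ)) := by
    apply Integrable.mono' (g := fun t => Real.exp (-(s * t)) * (M * ‖f‖))
    · have : IntegrableOn (fun t : ℝ => Real.exp (-s * t)) (Ioi (0:ℝ)) :=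
        exp_neg_integrableOn_Ioi 0 hs
      simpa [neg_mul] using this.mul_const (M * ‖f‖)
    · exact (hexp_cont.smul hTf).aestronglyMeasurable.restrict
    · filter_upwards [ae_restrict_mem measurableSet_Ioi] with t ht
      rw [norm_smul, norm_of_nonneg (exp_nonneg _)]
      exact mul_le_mul_of_nonneg_left (hT_bdd t (le_of_lt ht) f) (exp_nonneg _)
  -- integration by parts identity
  have parts : ∀ b : ℝ, 0 ≤ b →
      ∫ t in (0:ℝ)..b, Real.exp (-(s * t)) • T t f
        = Real.exp (-(s * b)) • I b + s • ∫ t in (0:ℝ)..b, Real.exp (-(s * t)) • I t := by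
    intro b hb
    have hF : ∀ t : ℝ, HasDerivAt (fun t => Real.exp (-(s * t)) • I t)
        (Real.exp (-(s * t)) • T t f - (s * Real.exp (-(s * t))) • I t) t := by
      intro t
      have hc : HasDerivAt (fun t : ℝ => Real.exp (-(s * t))) (-s * Real.exp (-(s * t))) t := by
        have h1 : HasDerivAt (fun t : ℝ => -(s * t)) (-s) t := by
          simpa using ((hasDerivAt_id t).const_mul s).fun_neg
        simpa [mul_comm] using h1.exp
      have := hc.fun_smul (hIderiv t)
      convert this using 1
      module
    have hint : IntervalIntegrable
        (fun t => Real.exp (-(s * t)) • T t f - (s * Real.exp (-(s * t))) • I t) volume 0 b := by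
      apply Continuous.intervalIntegrable
      exact (hexp_cont.smul hTf).sub ((continuous_const.mul hexp_cont).smul hIcont)
    have hFTC := intervalIntegral.integral_eq_sub_of_hasDerivAt
      (f := fun t => Real.exp (-(s * t)) • I t) (fun x _ => hF x) hint
    have hI0 : I 0 = 0 := intervalIntegral.integral_same
    simp only [hI0, smul_zero, sub_zero] at hFTC
    have hsplit : ∫ t in (0:ℝ)..b,
        (Real.exp (-(s * t)) • T t f - (s * Real.exp (-(s * t))) • I t)
        = (∫ t in (0:ℝ)..b, Real.exp (-(s * t)) • T t f)
          - ∫ t in (0:ℝ)..b, (s * Real.exp (-(s * t))) • I t := by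
      apply intervalIntegral.integral_sub
      · exact (hexp_cont.smul hTf).intervalIntegrable 0 b
      · exact ((continuous_const.mul hexp_cont).smul hIcont).intervalIntegrable 0 b
    have hsmul : ∫ t in (0:ℝ)..b, (s * Real.exp (-(s * t))) • I t
        = s • ∫ t in (0:ℝ)..b, Real.exp (-(s * t)) • I t := by
      rw [← intervalIntegral.integral_smul]
      congr 1; ext t; rw [mul_smul]
    rw [hsplit, hsmul] at hFTC
    rw [← hFTC]; abel
  -- integrability on finite intervals
  have hGm : ∀ b : ℝ, 0 ≤ b → IntegrableOn (fun t => Real.exp (-(s * t)) • G t) (Ioc 0 b) := by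
    intro b hb
    have hco : ContinuousOn (fun t => Real.exp (-(s * t)) • G t) (Icc 0 b) :=
      (hexp_cont.continuousOn).smul (h_cont.mono Icc_subset_Ici_self)
    exact hco.integrableOn_Icc.mono_set Ioc_subset_Icc_self
  have hIm : ∀ b : ℝ, IntegrableOn (fun t => Real.exp (-(s * t)) • I t) (Ioc 0 b) :=
    fun b => (hexp_cont.smul hIcont).integrableOn_Ioc
  have hTm : ∀ b : ℝ, IntegrableOn (fun t => Real.exp (-(s * t)) • T t f) (Ioc 0 b) :=
    fun b => (hexp_cont.smul hTf).integrableOn_Ioc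
  -- the approximating sequence
  set A : ℕ → X := fun n => ∫ t in Ioc (0:ℝ) (n:ℝ), Real.exp (-(s * t)) • I t with hAdef
  set B : ℕ → X := fun n => ∫ t in Ioc (0:ℝ) (n:ℝ), Real.exp (-(s * t)) • G t with hBdef
  have hpair : ∀ n : ℕ, ((s • A n, s • B n) : X × X) ∈ Γ := by
    intro n
    have h1 : (∫ t in Ioc (0:ℝ) (n:ℝ),
        ((Real.exp (-(s * t)) • I t, Real.exp (-(s * t)) • G t) : X × X)) ∈ Γ := by
      apply submodule_integral_mem Γ hΓclosed measure_Ioc_lt_top.ne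
      · filter_upwards [ae_restrict_mem measurableSet_Ioc] with t ht
        have ht0 : (0:ℝ) ≤ t := le_of_lt ht.1
        have hIG : ((I t, G t) : X × X) ∈ Γ := by
          rw [hG t ht0]; exact hΓmem (I t) (h_mem t ht0)
        simpa [Prod.smul_mk] using Γ.smul_mem (Real.exp (-(s * t))) hIG
      · exact (hIm (n:ℝ)).prodMk (hGm (n:ℝ) n.cast_nonneg)
    rw [integral_pair (hIm (n:ℝ)) (hGm (n:ℝ) n.cast_nonneg)] at h1
    exact Γ.smul_mem s h1
  -- limits
  have key1 : Tendsto (fun n : ℕ => ∫ t in (0:ℝ)..(n:ℝ), Real.exp (-(s * t)) • T t f)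
      atTop (nhds q) :=
    intervalIntegral_tendsto_integral_Ioi 0 hqi tendsto_natCast_atTop_atTop
  have hx : Tendsto (fun x : ℝ => x * Real.exp (-(s * x))) atTop (nhds 0) := by
    have h := (tendsto_pow_mul_exp_neg_atTop_nhds_zero 1).comp
      (tendsto_id.const_mul_atTop hs)
    have h2 := h.const_mul s⁻¹
    rw [mul_zero] at h2
    refine h2.congr fun x => ?_
    simp only [Function.comp_apply, pow_one, id_eq]
    field_simp
  have key2 : Tendsto (fun n : ℕ => Real.exp (-(s * (n:ℝ))) • I (n:ℝ)) atTop (nhds 0) := by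
    apply squeeze_zero_norm
      (a := fun n : ℕ => M * ‖f‖ * ((n:ℝ) * Real.exp (-(s * (n:ℝ)))))
    · intro n
      rw [norm_smul, norm_of_nonneg (exp_nonneg _)]
      calc Real.exp (-(s * (n:ℝ))) * ‖I (n:ℝ)‖
          ≤ Real.exp (-(s * (n:ℝ))) * (M * ‖f‖ * (n:ℝ)) :=
            mul_le_mul_of_nonneg_left (hInorm (n:ℝ) n.cast_nonneg) (exp_nonneg _)
        _ = M * ‖f‖ * ((n:ℝ) * Real.exp (-(s * (n:ℝ)))) := by ring
    · have := (hx.comp tendsto_natCast_atTop_atTop).const_mul (M * ‖f‖)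
      rw [mul_zero] at this
      exact this
  have hAeq : ∀ n : ℕ, s • A n
      = (∫ t in (0:ℝ)..(n:ℝ), Real.exp (-(s * t)) • T t f)
        - Real.exp (-(s * (n:ℝ))) • I (n:ℝ) := by
    intro n
    have hA : A n = ∫ t in (0:ℝ)..(n:ℝ), Real.exp (-(s * t)) • I t :=
      (intervalIntegral.integral_of_le n.cast_nonneg).symm
    rw [hA, parts (n:ℝ) n.cast_nonneg]
    abel
  have limA : Tendsto (fun n : ℕ => s • A n) atTop (nhds q) := by
    simp only [hAeq]
    simpa using key1.sub key2
  -- the exponential integral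
  have hexpInt : ∀ b : ℝ, s * ∫ t in (0:ℝ)..b, Real.exp (-(s * t))
      = 1 - Real.exp (-(s * b)) := by
    intro b
    have hF : ∀ t : ℝ, HasDerivAt (fun t : ℝ => -Real.exp (-(s * t)))
        (s * Real.exp (-(s * t))) t := by
      intro t
      have h1 : HasDerivAt (fun t : ℝ => -(s * t)) (-s) t := by
        simpa using ((hasDerivAt_id t).const_mul s).fun_neg
      have := h1.exp.fun_neg
      simpa [mul_comm] using this
    have hfi : IntervalIntegrable (fun t => s * Real.exp (-(s * t))) volume 0 b :=
      (continuous_const.mul hexp_cont).intervalIntegrable 0 b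
    have h3 := intervalIntegral.integral_eq_sub_of_hasDerivAt (fun x _ => hF x) hfi
    rw [← intervalIntegral.integral_const_mul, h3]
    simp [Real.exp_zero]
    ring
  have hBeq : ∀ n : ℕ, s • B n
      = s • (∫ t in (0:ℝ)..(n:ℝ), Real.exp (-(s * t)) • T t f)
        - (1 - Real.exp (-(s * (n:ℝ)))) • f := by
    intro n
    have hB1 : B n = (∫ t in Ioc (0:ℝ) (n:ℝ), Real.exp (-(s * t)) • T t f)
        - (∫ t in Ioc (0:ℝ) (n:ℝ), Real.exp (-(s * t))) • f := by
      simp only [hBdef]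
      rw [show (∫ t in Ioc (0:ℝ) (n:ℝ), Real.exp (-(s * t)) • G t)
          = ∫ t in Ioc (0:ℝ) (n:ℝ),
              (Real.exp (-(s * t)) • T t f - Real.exp (-(s * t)) • f) from
        setIntegral_congr_fun measurableSet_Ioc fun t ht => by
          rw [hGT t (le_of_lt ht.1), smul_sub]]
      rw [integral_sub (hTm (n:ℝ)) (((hexp_cont.fun_smul continuous_const).integrableOn_Ioc))]
      rw [integral_smul_const]
    have hioc : (∫ t in Ioc (0:ℝ) (n:ℝ), Real.exp (-(s * t)) • T t f)
        = ∫ t in (0:ℝ)..(n:ℝ), Real.exp (-(s * t)) • T t f :=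
      (intervalIntegral.integral_of_le n.cast_nonneg).symm
    have hioc2 : (∫ t in Ioc (0:ℝ) (n:ℝ), Real.exp (-(s * t)))
        = ∫ t in (0:ℝ)..(n:ℝ), Real.exp (-(s * t)) :=
      (intervalIntegral.integral_of_le n.cast_nonneg).symm
    rw [hB1, hioc, hioc2, smul_sub, smul_smul, hexpInt (n:ℝ)]
  have limB : Tendsto (fun n : ℕ => s • B n) atTop (nhds (s • q - f)) := by
    simp only [hBeq]
    have l1 : Tendsto (fun n : ℕ =>
        s • ∫ t in (0:ℝ)..(n:ℝ), Real.exp (-(s * t)) • T t f) atTop (nhds (s • q)) :=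
      key1.const_smul s
    have lexp : Tendsto (fun n : ℕ => Real.exp (-(s * (n:ℝ)))) atTop (nhds 0) := by
      have hsn : Tendsto (fun n : ℕ => s * (n:ℝ)) atTop atTop :=
        tendsto_natCast_atTop_atTop.const_mul_atTop hs
      have : Tendsto (fun n : ℕ => -(s * (n:ℝ))) atTop atBot :=
        tendsto_neg_atTop_atBot.comp hsn
      exact Real.tendsto_exp_atBot.comp this
    have l2 : Tendsto (fun n : ℕ => (1 - Real.exp (-(s * (n:ℝ)))) • f) atTop (nhds f) := by
      have hc : Tendsto (fun n : ℕ => 1 - Real.exp (-(s * (n:ℝ)))) atTop (nhds 1) := by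
        simpa using tendsto_const_nhds.sub lexp
      simpa using hc.smul_const f
    exact l1.sub l2
  -- pass to the limit in the closed graph
  have hmemlim : ((q, s • q - f) : X × X) ∈ Γ :=
    hΓclosed.mem_of_tendsto (limA.prodMk_nhds limB) (Eventually.of_forall hpair)
  obtain ⟨d, hd⟩ := hmemlim
  have hd1 : (d : X) = q := congrArg Prod.fst hd
  have hd2 : L d = s • q - f := congrArg Prod.snd hd
  have hqD : q ∈ D := hd1 ▸ d.2
  refine ⟨hqD, ?_⟩
  have hde : (⟨q, hqD⟩ : D) = d := Subtype.ext hd1.symm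
  rw [hde, hd2]
  abel
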